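/- (BMC with E-transform.) Assume (N₁, m₁) ▷_E (N₂, m₂) and that F₂ is the E-transform of F₁. Then F₁ is reachable in (N₁, m₁) if and only if there exists j ≥ 0 such that F₂(ȳ_j) ∧ φ_j(N₂, m₂) is satisfiable, where φ_j(N₂, m₂) is the j-step BMC unrolling of N₂. -/

import Mathlib

/-- A labeled Petri net over a global type `V` of variables/places and labels in
`L` (`none` is the silent label `τ`).  The net only uses the places in `places`:
the flow functions vanish outside of it. -/
structure LNet (V L : Type) where
  T : Type
  places : Set V
  Pre : T → V → ℕ
  Post : T → V → ℕ
  pre_supp : ∀ t p, p ∉ places → Pre t p = 0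
  post_supp : ∀ t p, p ∉ places → Post t p = 0
  label : T → Option L

namespace LNet

variable {V L : Type}

/-- Transition `t` is enabled at marking `m`. -/
def Enabled (N : LNet V L) (m : V → ℕ) (t : N.T) : Prop :=
  ∀ p, N.Pre t p ≤ m p

/-- `m →t m'` : `t` is enabled at `m` and `m' = m - Pre(t) + Post(t)` (pointwise). -/
def Fire (N : LNet V L) (m : V → ℕ) (t : N.T) (m' : V → ℕ) : Prop :=
  N.Enabled m t ∧ ∀ p, m' p = m p - N.Pre t p + N.Post t p

/-- `m ⇒ρ m'` : the firing sequence `ρ` fires from `m` to `m'`. -/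
def FireSeq (N : LNet V L) : (V → ℕ) → List N.T → (V → ℕ) → Prop
  | m, [], m' => m' = m
  | m, t :: ρ, m'' => ∃ m', N.Fire m t m' ∧ N.FireSeq m' ρ m''

/-- Reachability from `m₀`. -/
def Reach (N : LNet V L) (m₀ m : V → ℕ) : Prop :=
  ∃ ρ, N.FireSeq m₀ ρ m

/-- The observation sequence of a firing sequence (silent transitions erased). -/
def Obs (N : LNet V L) (ρ : List N.T) : List L :=
  ρ.filterMap N.label

end LNet

/-- `m₁ ⊎ m₂ ⊨ E` : the two markings are compatible and, jointly, satisfy the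
constraint system `E` (i.e. `E ∧ m̲₁ ∧ m̲₂` is satisfiable: some valuation of all
the variables agrees with `m₁` on `P₁`, with `m₂` on `P₂` and satisfies `E`). -/
def JSat {V L : Type} (N₁ N₂ : LNet V L) (E : (V → ℕ) → Prop)
    (m₁ m₂ : V → ℕ) : Prop :=
  ∃ v : V → ℕ, (∀ p ∈ N₁.places, v p = m₁ p) ∧ (∀ p ∈ N₂.places, v p = m₂ p) ∧ E v

/-- `(N₁, m₁) ⊒_E (N₂, m₂)` : `(N₂, m₂)` is an `E`-abstraction of `(N₁, m₁)`,
conditions (A1) and (A2). -/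
def EAbs {V L : Type} (N₁ : LNet V L) (m₁ : V → ℕ) (N₂ : LNet V L) (m₂ : V → ℕ)
    (E : (V → ℕ) → Prop) : Prop :=
  -- (A1) the initial markings jointly satisfy `E`
  JSat N₁ N₂ E m₁ m₂ ∧
  -- (A2)
  ∀ ρ₁ m₁', N₁.FireSeq m₁ ρ₁ m₁' →
    (∃ m₂' : V → ℕ, JSat N₁ N₂ E m₁' m₂') ∧
    ∀ m₂' : V → ℕ, JSat N₁ N₂ E m₁' m₂' →
      ∃ ρ₂ m₂'', N₂.FireSeq m₂ ρ₂ m₂'' ∧ (∀ p ∈ N₂.places, m₂'' p = m₂' p) ∧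
        N₁.Obs ρ₁ = N₂.Obs ρ₂

/-- `(N₁, m₁) ▷_E (N₂, m₂)` : `E`-abstraction equivalence (abstraction in both
directions). -/
def EEquiv {V L : Type} (N₁ : LNet V L) (m₁ : V → ℕ) (N₂ : LNet V L) (m₂ : V → ℕ)
    (E : (V → ℕ) → Prop) : Prop :=
  EAbs N₁ m₁ N₂ m₂ E ∧ EAbs N₂ m₂ N₁ m₁ E

/-- `F` is a formula whose (free) variables all belong to `S`: its truth value
only depends on the values of the variables in `S`. -/
def FormulaDependsOn {V : Type} (F : (V → ℕ) → Prop) (S : Set V) : Prop :=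
  ∀ v w : V → ℕ, (∀ x ∈ S, v x = w x) → (F v ↔ F w)

/-- The `E`-transform `F₂(ȳ) ≜ ∃x̄. Ẽ(x̄, ȳ) ∧ F₁(x̄)` of a formula `F₁` with
variables in `P₁`. -/
def ETransform {V L : Type} (N₁ N₂ : LNet V L) (E : (V → ℕ) → Prop)
    (F₁ : (V → ℕ) → Prop) : (V → ℕ) → Prop :=
  fun m₂ => ∃ m₁ : V → ℕ, JSat N₁ N₂ E m₁ m₂ ∧ F₁ m₁

/-- Semantic counterpart of the transition formula `T(x̄,x̄')`: fire at most one
transition (stuttering allowed), with the marking update stated over ℤ. -/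
def LNet.TStep {V L : Type} (N : LNet V L) (m m' : V → ℕ) : Prop :=
  (∀ p, m' p = m p) ∨
    ∃ t, N.Enabled m t ∧ ∀ p, (m' p : ℤ) = (m p : ℤ) + (N.Post t p : ℤ) - (N.Pre t p : ℤ)

/-- Satisfiability over ℕ of the `j`-step BMC unrolling `F(x̄_j) ∧ φ_j(N, m₀)`,
with `φ₀ ≜ m̲₀(x̄₀)` and `φ_{i+1} ≜ φ_i ∧ T(x̄_i, x̄_{i+1})`. -/
def BMCSat {V L : Type} (N : LNet V L) (m₀ : V → ℕ) (F : (V → ℕ) → Prop)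
    (j : ℕ) : Prop :=
  ∃ ms : ℕ → V → ℕ, ms 0 = m₀ ∧ (∀ i < j, N.TStep (ms i) (ms (i + 1))) ∧ F (ms j)

private lemma fire_tstep {V L : Type} (N : LNet V L) {m m' : V → ℕ} {t : N.T}
    (hf : N.Fire m t m') : N.TStep m m' := by
  refine Or.inr ⟨t, hf.1, fun p => ?_⟩
  have h1 := hf.1 p
  have h2 := hf.2 p
  omega

private lemma fireSeq_to_chain {V L : Type} (N : LNet V L) :
    ∀ (ρ : List N.T) (m m' : V → ℕ), N.FireSeq m ρ m' →
      ∃ ms : ℕ → V → ℕ, ms 0 = m ∧ ms ρ.length = m' ∧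
        ∀ i < ρ.length, N.TStep (ms i) (ms (i + 1)) := by
  intro ρ
  induction ρ with
  | nil =>
    intro m m' hseq
    exact ⟨fun _ => m, rfl, hseq.symm, by simp⟩
  | cons t ρ ih =>
    intro m m' hseq
    obtain ⟨m'', hf, hseq'⟩ := hseq
    obtain ⟨ms', h0, hl, hstep⟩ := ih m'' m' hseq'
    refine ⟨fun k => if k = 0 then m else ms' (k - 1), rfl, by simpa using hl, ?_⟩
    intro i hi
    rcases Nat.eq_zero_or_pos i with rfl | hpos
    · simpa [h0] using fire_tstep N hf
    · have hne : i ≠ 0 := hpos.ne'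
      have h' := hstep (i - 1) (by simp at hi; omega)
      rw [show i - 1 + 1 = i from by omega] at h'
      simpa [hne, Nat.succ_sub_one] using h'

private lemma fireSeq_append_one {V L : Type} (N : LNet V L) :
    ∀ (ρ : List N.T) (m m' m'' : V → ℕ) (t : N.T),
      N.FireSeq m ρ m' → N.Fire m' t m'' → N.FireSeq m (ρ ++ [t]) m'' := by
  intro ρ
  induction ρ with
  | nil =>
    intro m m' m'' t hseq hf
    subst hseq
    exact ⟨m'', hf, rfl⟩
  | cons s ρ ih =>
    intro m m' m'' t hseq hf
    obtain ⟨mm, hfs, hseq'⟩ := hseq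
    exact ⟨mm, hfs, ih mm m' m'' t hseq' hf⟩

private lemma chain_to_fireSeq {V L : Type} (N : LNet V L) (m₀ : V → ℕ) :
    ∀ (j : ℕ) (ms : ℕ → V → ℕ), ms 0 = m₀ →
      (∀ i < j, N.TStep (ms i) (ms (i + 1))) →
      ∃ ρ, N.FireSeq m₀ ρ (ms j) := by
  intro j
  induction j with
  | zero => intro ms h0 _; exact ⟨[], h0⟩
  | succ j ih =>
    intro ms h0 hstep
    obtain ⟨ρ, hρ⟩ := ih ms h0 (fun i hi => hstep i (by omega))
    rcases hstep j (by omega) with heq | ⟨t, hen, hupd⟩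
    · have : ms (j + 1) = ms j := funext heq
      exact ⟨ρ, this ▸ hρ⟩
    · refine ⟨ρ ++ [t], fireSeq_append_one N ρ m₀ (ms j) (ms (j + 1)) t hρ ⟨hen, ?_⟩⟩
      intro p
      have h1 := hen p
      have h2 := hupd p
      omega

/-- (BMC with `E`-transform.)  Assume `(N₁, m₁) ▷_E (N₂, m₂)` and let `F₂` be
the `E`-transform of `F₁`.  Then `F₁` is reachable in `(N₁, m₁)` iff there is
some `j ≥ 0` such that the BMC formula `F₂(ȳ_j) ∧ φ_j(N₂, m₂)` is satisfiable. -/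
theorem bmc_with_Etransform {V L : Type} (N₁ N₂ : LNet V L) (m₁ m₂ : V → ℕ)
    (E : (V → ℕ) → Prop) (F₁ : (V → ℕ) → Prop)
    (hvars : FormulaDependsOn F₁ N₁.places)
    (h : EEquiv N₁ m₁ N₂ m₂ E) :
    (∃ m', N₁.Reach m₁ m' ∧ F₁ m') ↔
      ∃ j : ℕ, BMCSat N₂ m₂ (ETransform N₁ N₂ E F₁) j := by
  constructor
  · rintro ⟨m', ⟨ρ₁, hρ₁⟩, hF⟩
    obtain ⟨⟨m₂', hj⟩, hall⟩ := h.1.2 ρ₁ m' hρ₁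
    obtain ⟨ρ₂, m₂'', hseq, hagree, _⟩ := hall m₂' hj
    obtain ⟨ms, h0, hl, hstep⟩ := fireSeq_to_chain N₂ ρ₂ m₂ m₂'' hseq
    refine ⟨ρ₂.length, ms, h0, hstep, ?_⟩
    obtain ⟨v, hv1, hv2, hvE⟩ := hj
    exact ⟨m', ⟨v, hv1, fun p hp => by rw [hv2 p hp, ← hagree p hp, hl], hvE⟩, hF⟩
  · rintro ⟨j, ms, h0, hstep, m₁', ⟨v, hv1, hv2, hvE⟩, hF⟩
    obtain ⟨ρ, hρ⟩ := chain_to_fireSeq N₂ m₂ j ms h0 hstep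
    obtain ⟨_, hall⟩ := h.2.2 ρ (ms j) hρ
    obtain ⟨ρ₁, m₁'', hseq₁, hagree₁, _⟩ := hall m₁' ⟨v, hv2, hv1, hvE⟩
    exact ⟨m₁'', ⟨ρ₁, hseq₁⟩, (hvars m₁'' m₁' fun p hp => hagree₁ p hp).2 hF⟩
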